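/- Let K = [[0,1],[1,0]] and let SL(ℍ⁺) be the set of 2×2 quaternionic matrices A satisfying ᵀĀ·K·A = K. Then: (i) every A ∈ SL(ℍ⁺) satisfies det_ℍ(A) = 1; (ii) SL(ℍ⁺) is a group: the identity matrix belongs to SL(ℍ⁺), SL(ℍ⁺) is closed under matrix multiplication, and every A ∈ SL(ℍ⁺) is invertible with A⁻¹ ∈ SL(ℍ⁺); (iii) a matrix A = [[a,b],[c,d]] belongs to SL(ℍ⁺) if and only if Re(a·conj(c)) = 0, Re(b·conj(d)) = 0, and conj(b)·c + conj(d)·a = 1. -/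

import Mathlib

open scoped Quaternion

/-- The Dieudonné determinant of a 2×2 quaternionic matrix. -/
noncomputable def detH (A : Matrix (Fin 2) (Fin 2) ℍ[ℝ]) : ℝ :=
  Real.sqrt (‖A 0 0‖ ^ 2 * ‖A 1 1‖ ^ 2 + ‖A 1 0‖ ^ 2 * ‖A 0 1‖ ^ 2
    - 2 * (A 1 0 * star (A 0 0) * A 0 1 * star (A 1 1)).re)

/-- The group `SL(ℍ⁺)` of 2×2 quaternionic matrices satisfying `ᵀĀ K A = K`
with `K = [[0,1],[1,0]]`. -/
def SLHplus : Set (Matrix (Fin 2) (Fin 2) ℍ[ℝ]) :=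
  {A | A.conjTranspose * !![(0 : ℍ[ℝ]), 1; 1, 0] * A = !![(0 : ℍ[ℝ]), 1; 1, 0]}

section auxlemmas

open Quaternion

lemma my_mul_eq_one_comm {𝔸 : Type*} [Ring 𝔸] [Algebra ℝ 𝔸] [FiniteDimensional ℝ 𝔸]
    {a b : 𝔸} (h : b * a = 1) : a * b = 1 := by
  have hinj : Function.Injective (LinearMap.mulLeft ℝ a) := by
    intro x y hxy
    have h2 : b * (a * x) = b * (a * y) := by
      simpa [LinearMap.mulLeft_apply] using congrArg (b * ·) hxy
    simpa [← mul_assoc, h] using h2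
  obtain ⟨c, hc⟩ := (LinearMap.injective_iff_surjective).1 hinj 1
  have hc' : a * c = 1 := hc
  have hcb : c = b := by
    calc c = 1 * c := (one_mul c).symm
    _ = b * a * c := by rw [h]
    _ = b * (a * c) := by rw [mul_assoc]
    _ = b := by rw [hc', mul_one]
  rw [← hcb]; exact hc'

lemma re_mul_comm (x y : ℍ[ℝ]) : (x * y).re = (y * x).re := by
  simp only [Quaternion.re_mul]; ring

lemma re_mul_star_comm (x y : ℍ[ℝ]) : (x * star y).re = (y * star x).re := by
  rw [← Quaternion.re_star, star_mul, star_star]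

lemma re_zero_iff (a c : ℍ[ℝ]) : star c * a + star a * c = 0 ↔ (a * star c).re = 0 := by
  have h : star c * a + star a * c = (((2:ℝ) * (star a * c).re : ℝ) : ℍ[ℝ]) := by
    have := Quaternion.star_add_self' (star a * c)
    simpa [star_mul] using this
  have hre : (star a * c).re = (a * star c).re := by
    rw [re_mul_comm, ← Quaternion.re_star, star_mul, star_star]
  rw [h, hre, show ((0:ℍ[ℝ])) = ((0:ℝ):ℍ[ℝ]) from rfl, Quaternion.coe_inj]
  constructor <;> intro h0 <;> linarith

lemma mem_iff (a b c d : ℍ[ℝ]) :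
    !![a,b;c,d] ∈ SLHplus ↔
    (star c * a + star a * c = 0 ∧ star c * b + star a * d = 1 ∧
     star d * a + star b * c = 1 ∧ star d * b + star b * d = 0) := by
  simp only [SLHplus, Set.mem_setOf_eq]
  have hct : (!![a,b;c,d]).conjTranspose = !![star a, star c; star b, star d] := by
    apply Matrix.ext; intro i j; fin_cases i <;> fin_cases j <;> rfl
  rw [hct, Matrix.mul_fin_two, Matrix.mul_fin_two]
  rw [← Matrix.ext_iff]
  simp [Fin.forall_fin_two, and_assoc]

lemma mem_iff_three (a b c d : ℍ[ℝ]) :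
    !![a, b; c, d] ∈ SLHplus ↔
      ((a * star c).re = 0 ∧ (b * star d).re = 0 ∧ star b * c + star d * a = 1) := by
  rw [mem_iff]
  constructor
  · rintro ⟨h1, _, h3, h4⟩
    exact ⟨(re_zero_iff a c).1 h1, (re_zero_iff b d).1 h4, by rw [add_comm]; exact h3⟩
  · rintro ⟨h1, h2, h3⟩
    have h3' : star d * a + star b * c = 1 := by rw [add_comm]; exact h3
    refine ⟨(re_zero_iff a c).2 h1, ?_, h3', ?_⟩
    · have := congrArg star h3'
      simpa [star_add, star_mul, add_comm] using this
    · exact (re_zero_iff b d).2 h2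

lemma norm_sq_eq (x : ℍ[ℝ]) : ‖x‖ ^ 2 = normSq x := by
  rw [sq, ← Quaternion.normSq_eq_norm_mul_self]

theorem SLHplus_group_and_characterization :
    (∀ A ∈ SLHplus, detH A = 1) ∧
    ((1 : Matrix (Fin 2) (Fin 2) ℍ[ℝ]) ∈ SLHplus ∧
      (∀ A ∈ SLHplus, ∀ B ∈ SLHplus, A * B ∈ SLHplus) ∧
      (∀ A ∈ SLHplus, ∃ B : Matrix (Fin 2) (Fin 2) ℍ[ℝ],
        A * B = 1 ∧ B * A = 1 ∧ B ∈ SLHplus)) ∧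
    (∀ a b c d : ℍ[ℝ], !![a, b; c, d] ∈ SLHplus ↔
      ((a * star c).re = 0 ∧ (b * star d).re = 0 ∧ star b * c + star d * a = 1)) := by
  set K : Matrix (Fin 2) (Fin 2) ℍ[ℝ] := !![(0 : ℍ[ℝ]), 1; 1, 0] with hKdef
  have hK : K * K = 1 := by
    rw [hKdef, Matrix.mul_fin_two, Matrix.one_fin_two]
    norm_num
  have hKH : K.conjTranspose = K := by
    rw [hKdef]
    apply Matrix.ext; intro i j
    fin_cases i <;> fin_cases j <;> simp [Matrix.conjTranspose_apply]
  refine ⟨?_, ⟨?_, ?_, ?_⟩, ?_⟩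
  · -- determinant
    intro A hA
    have hA' : !![A 0 0, A 0 1; A 1 0, A 1 1] ∈ SLHplus := by
      rwa [← Matrix.eta_fin_two A]
    rw [mem_iff_three] at hA'
    obtain ⟨h1, h2, h3⟩ := hA'
    set a := A 0 0; set b := A 0 1; set c := A 1 0; set d := A 1 1
    have key : Quaternion.normSq a * Quaternion.normSq d
        + Quaternion.normSq c * Quaternion.normSq b
        - 2 * (c * star a * b * star d).re = 1 := by
      have e1 : Quaternion.normSq (star b * c + star d * a) = 1 := by
        rw [h3]; simp
      rw [Quaternion.normSq_add] at e1
      have ex : Quaternion.normSq (star b * c) = Quaternion.normSq b * Quaternion.normSq c := by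
        rw [map_mul, Quaternion.normSq_star]
      have ey : Quaternion.normSq (star d * a) = Quaternion.normSq d * Quaternion.normSq a := by
        rw [map_mul, Quaternion.normSq_star]
      have hdb : d * star b = -(b * star d) := by
        have hw : (b * star d).re = 0 := h2
        have := Quaternion.self_add_star' (b * star d)
        rw [hw] at this
        have h0 : b * star d + star (b * star d) = 0 := by
          rw [this]; norm_num
        have : star (b * star d) = -(b * star d) := eq_neg_of_add_eq_zero_right h0
        rw [← this, star_mul, star_star]
      have ere : (star b * c * star (star d * a)).re = -(c * star a * b * star d).re := by
        have e2 : star b * c * star (star d * a) = star b * (c * star a * d) := by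
          rw [star_mul, star_star]; noncomm_ring
        rw [e2, re_mul_comm]
        have e3 : c * star a * d * star b = -(c * star a * b * star d) := by
          calc c * star a * d * star b = c * star a * (d * star b) := by rw [mul_assoc]
          _ = c * star a * (-(b * star d)) := by rw [hdb]
          _ = -(c * star a * b * star d) := by noncomm_ring
        rw [e3]
        simp
      rw [ex, ey, ere] at e1
      linarith
    unfold detH
    rw [norm_sq_eq, norm_sq_eq, norm_sq_eq, norm_sq_eq, key, Real.sqrt_one]
  · -- identity
    show (1 : Matrix (Fin 2) (Fin 2) ℍ[ℝ]).conjTranspose * K * 1 = K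
    simp
  · -- products
    intro A hA B hB
    have hA' : A.conjTranspose * K * A = K := hA
    have hB' : B.conjTranspose * K * B = K := hB
    show (A * B).conjTranspose * K * (A * B) = K
    have e : (A * B).conjTranspose * K * (A * B)
        = B.conjTranspose * (A.conjTranspose * K * A) * B := by
      rw [Matrix.conjTranspose_mul]; noncomm_ring
    rw [e, hA', hB']
  · -- inverses
    intro A hA
    have hA' : A.conjTranspose * K * A = K := hA
    refine ⟨K * A.conjTranspose * K, ?_, ?_, ?_⟩
    case refine_2 =>
      calc K * A.conjTranspose * K * A = K * (A.conjTranspose * K * A) := by noncomm_ring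
      _ = K * K := by rw [hA']
      _ = 1 := hK
    case refine_1 =>
      apply my_mul_eq_one_comm
      calc K * A.conjTranspose * K * A = K * (A.conjTranspose * K * A) := by noncomm_ring
      _ = K * K := by rw [hA']
      _ = 1 := hK
    case refine_3 =>
      have hAB : A * (K * A.conjTranspose * K) = 1 := by
        apply my_mul_eq_one_comm
        calc K * A.conjTranspose * K * A = K * (A.conjTranspose * K * A) := by noncomm_ring
        _ = K * K := by rw [hA']
        _ = 1 := hK
      have hAKA : A * K * A.conjTranspose = K := by
        have h1 : A * K * A.conjTranspose * K = 1 := by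
          rw [← hAB]; noncomm_ring
        calc A * K * A.conjTranspose = A * K * A.conjTranspose * (K * K) := by rw [hK, mul_one]
        _ = (A * K * A.conjTranspose * K) * K := by noncomm_ring
        _ = 1 * K := by rw [h1]
        _ = K := one_mul K
      show (K * A.conjTranspose * K).conjTranspose * K * (K * A.conjTranspose * K) = K
      have e : (K * A.conjTranspose * K).conjTranspose * K * (K * A.conjTranspose * K)
          = K * ((A * (K * K)) * K * A.conjTranspose) * K := by
        simp only [Matrix.conjTranspose_mul, Matrix.conjTranspose_conjTranspose, hKH]
        noncomm_ring
      rw [e, hK, Matrix.mul_one, hAKA, hK, Matrix.one_mul]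
  · -- characterization
    exact mem_iff_three

end auxlemmas
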